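/- Let G be the disjoint union of two directed paths u₁ → ... → u_k and w₁ → ... → w_k, each with k vertices, and consider k agents. The allocation assigning to agent i the items u_i and w_{k+1−i} achieves dissatisfaction exactly (i − 1) + (k − i) = k − 1 for every agent i, and this is optimal: no allocation achieves maximum dissatisfaction less than k − 1. -/

import Mathlib

/-- `u` is dominated by the set `P` of allocated items: some `v ∈ P` equals `u`
or has a directed path to `u`. -/
def Dominated {V : Type*} (A : V → V → Prop) (P : Set V) (u : V) : Prop :=
  ∃ v ∈ P, Relation.ReflTransGen A v u

/-- Dissatisfaction of an agent receiving the set `P`: the number of vertices not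
dominated by `P`. -/
noncomputable def diss {V : Type*} (A : V → V → Prop) (P : Set V) : ℕ :=
  {u : V | ¬ Dominated A P u}.ncard

/-- Satisfaction of an agent receiving the set `P`: the number of vertices
dominated by `P`. -/
noncomputable def sat {V : Type*} (A : V → V → Prop) (P : Set V) : ℕ :=
  {u : V | Dominated A P u}.ncard

/-- The directed graph with arc relation `A` is acyclic. -/
def Acyclic {V : Type*} (A : V → V → Prop) : Prop :=
  ∀ v, ¬ Relation.TransGen A v v

/-- `P` is an antichain: no vertex of `P` is reachable from another vertex of `P`. -/
def IsAntichainIn {V : Type*} (A : V → V → Prop) (P : Set V) : Prop :=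
  ∀ x ∈ P, ∀ y ∈ P, x ≠ y → ¬ Relation.ReflTransGen A x y

/-- Arc relation of a disjoint union of directed paths: within each component
`c`, vertex `j` points to vertex `j+1`. -/
def PathsArc (c k : ℕ) : Fin c × Fin k → Fin c × Fin k → Prop :=
  fun p q => p.1 = q.1 ∧ (p.2 : ℕ) + 1 = (q.2 : ℕ)

/-- The allocation giving agent `i` the items `u_i` and `w_{k+1-i}` on the two paths. -/
def TwoPathAlloc (k : ℕ) (i : Fin k) : Set (Fin 2 × Fin k) :=
  {((0 : Fin 2), i), ((1 : Fin 2), i.rev)}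



lemma reach_of_add {c k : ℕ} (d : ℕ) :
    ∀ p q : Fin c × Fin k, p.1 = q.1 → (q.2 : ℕ) = p.2 + d →
      Relation.ReflTransGen (PathsArc c k) p q := by
  induction d with
  | zero =>
    intro p q h1 h2
    have : p = q := Prod.ext h1 (Fin.ext (by omega))
    exact this ▸ Relation.ReflTransGen.refl
  | succ d ih =>
    intro p q h1 h2
    have hq := q.2.isLt
    have hlt : (p.2 : ℕ) + 1 < k := by omega
    exact Relation.ReflTransGen.head (b := (p.1, ⟨(p.2 : ℕ) + 1, hlt⟩)) ⟨rfl, rfl⟩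
      (ih _ q h1 (by simp; omega))

lemma pathsArc_reach_iff {c k : ℕ} (p q : Fin c × Fin k) :
    Relation.ReflTransGen (PathsArc c k) p q ↔ p.1 = q.1 ∧ (p.2 : ℕ) ≤ q.2 := by
  constructor
  · intro h
    induction h with
    | refl => exact ⟨rfl, le_rfl⟩
    | tail _ h2 ih => exact ⟨ih.1.trans h2.1, by have := h2.2; omega⟩
  · rintro ⟨h1, h2⟩
    obtain ⟨d, hd⟩ := Nat.exists_eq_add_of_le h2
    exact reach_of_add d p q h1 hd




lemma part2 (k : ℕ) (hk : 1 ≤ k) (i : Fin k) :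
    diss (PathsArc 2 k) (TwoPathAlloc k i) = k - 1 := by
  have hset : {u : Fin 2 × Fin k | ¬ Dominated (PathsArc 2 k) (TwoPathAlloc k i) u}
      = ↑((({(0 : Fin 2)} ×ˢ Finset.Iio i) ∪ ({(1 : Fin 2)} ×ˢ Finset.Iio i.rev))) := by
    ext ⟨c, m⟩
    simp only [Set.mem_setOf_eq, Dominated, TwoPathAlloc, Set.mem_insert_iff,
      Set.mem_singleton_iff, Finset.coe_union, Set.mem_union, Finset.coe_product,
      Set.mem_prod, Finset.coe_singleton, Set.mem_singleton_iff, Finset.mem_coe,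
      Finset.mem_Iio, pathsArc_reach_iff]
    constructor
    · intro h
      fin_cases c
      · left
        refine ⟨rfl, ?_⟩
        by_contra hm
        exact h ⟨((0 : Fin 2), i), Or.inl rfl, rfl, show (i : ℕ) ≤ m by omega⟩
      · right
        refine ⟨rfl, ?_⟩
        by_contra hm
        exact h ⟨((1 : Fin 2), i.rev), Or.inr rfl, rfl, show (i.rev : ℕ) ≤ m by omega⟩
    · rintro (⟨rfl, hm⟩ | ⟨rfl, hm⟩) <;> rintro ⟨v, (rfl | rfl), h1, h2⟩
      · rw [Fin.lt_def] at hm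
        exact absurd (show (i : ℕ) ≤ m from h2) (by omega)
      · exact absurd (show (1 : Fin 2) = 0 from h1) (by decide)
      · exact absurd (show (0 : Fin 2) = 1 from h1) (by decide)
      · rw [Fin.lt_def] at hm
        exact absurd (show (i.rev : ℕ) ≤ m from h2) (by omega)
  rw [diss, hset, Set.ncard_coe_finset, Finset.card_union_of_disjoint, Finset.card_product,
    Finset.card_product]
  · simp only [Finset.card_singleton, one_mul, Fin.card_Iio]
    have := i.isLt
    have := Fin.val_rev i
    omega
  · simp only [Finset.disjoint_left, Finset.mem_product, Finset.mem_singleton]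
    rintro ⟨c, m⟩ ⟨rfl, _⟩ ⟨h, _⟩
    simp at h


lemma gauss (n : ℕ) : (∑ j ∈ Finset.range n, (j + 1)) * 2 = n * (n + 1) := by
  induction n with
  | zero => simp
  | succ n ih => rw [Finset.sum_range_succ, add_mul, ih]; ring

open Finset in
lemma part3 (k : ℕ) (hk : 1 ≤ k) (π : Fin k → Set (Fin 2 × Fin k))
    (hdisj : ∀ i j, i ≠ j → Disjoint (π i) (π j)) :
    k - 1 ≤ Finset.univ.sup fun i => diss (PathsArc 2 k) (π i) := by
  classical
  set A := PathsArc 2 k with hA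
  have hcard : ∀ i : Fin k, sat A (π i) + diss A (π i) = 2 * k := by
    intro i
    have h : {u : Fin 2 × Fin k | ¬ Dominated A (π i) u} = {u | Dominated A (π i) u}ᶜ := rfl
    rw [sat, diss, h, Set.ncard_add_ncard_compl]
    simp [Nat.card_eq_fintype_card]
  have hvert : ∀ u : Fin 2 × Fin k,
      (univ.filter fun i => Dominated A (π i) u).card ≤ (u.2 : ℕ) + 1 := by
    intro u
    have hIic : ((Finset.Iic u.2).card) = (u.2 : ℕ) + 1 := by simp
    rw [← hIic]
    apply Finset.card_le_card_of_injOn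
      (fun i => if h : Dominated A (π i) u then h.choose.2 else u.2)
    · intro i hi
      rw [Finset.mem_coe, Finset.mem_filter] at hi
      beta_reduce
      rw [dif_pos hi.2]
      have hc := hi.2.choose_spec
      have hr := (pathsArc_reach_iff _ _).mp hc.2
      exact Finset.mem_Iic.mpr (Fin.le_def.mpr hr.2)
    · intro i hi j hj hij
      simp only [Finset.coe_filter, Set.mem_setOf_eq, Finset.mem_univ, true_and] at hi hj
      simp only at hij
      rw [dif_pos hi, dif_pos hj] at hij
      by_contra hne
      have hci := hi.choose_spec
      have hcj := hj.choose_spec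
      have hri := (pathsArc_reach_iff _ _).mp hci.2
      have hrj := (pathsArc_reach_iff _ _).mp hcj.2
      have heq : hi.choose = hj.choose := Prod.ext (hri.1.trans hrj.1.symm) hij
      exact (Set.disjoint_left.mp (hdisj i j hne) hci.1) (heq ▸ hcj.1)
  have hsat_eq : ∀ i, sat A (π i) = (univ.filter fun u => Dominated A (π i) u).card := by
    intro i
    rw [sat, Set.ncard_eq_toFinset_card']
    simp [Set.toFinset_setOf]
  have hg := gauss k
  have hsum : ∑ i : Fin k, sat A (π i) ≤ k * (k + 1) := by
    calc ∑ i : Fin k, sat A (π i)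
        = ∑ i : Fin k, ∑ u : Fin 2 × Fin k, if Dominated A (π i) u then 1 else 0 := by
          exact Finset.sum_congr rfl fun i _ => by rw [hsat_eq, Finset.card_filter]
      _ = ∑ u : Fin 2 × Fin k, ∑ i : Fin k, if Dominated A (π i) u then 1 else 0 :=
          Finset.sum_comm
      _ = ∑ u : Fin 2 × Fin k, (univ.filter fun i => Dominated A (π i) u).card := by
          exact Finset.sum_congr rfl fun u _ => (Finset.card_filter _ _).symm
      _ ≤ ∑ u : Fin 2 × Fin k, ((u.2 : ℕ) + 1) := Finset.sum_le_sum fun u _ => hvert u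
      _ = k * (k + 1) := by
          rw [Fintype.sum_prod_type]
          rw [show (∑ c : Fin 2, ∑ m : Fin k, (((c, m).2 : ℕ) + 1))
              = 2 * ∑ m : Fin k, ((m : ℕ) + 1) by simp [two_mul]]
          rw [Fin.sum_univ_eq_sum_range (fun j => j + 1)] at *
          omega
  have htot : ∑ i : Fin k, (sat A (π i) + diss A (π i)) = k * (2 * k) := by
    rw [Finset.sum_congr rfl fun i _ => hcard i]
    simp [mul_comm]
  rw [Finset.sum_add_distrib] at htot
  have h1 : k * (k + 1) + k * (k - 1) = k * (2 * k) := by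
    cases k with
    | zero => simp
    | succ n => simp only [Nat.succ_sub_one]; ring
  have hds : k * (k - 1) ≤ ∑ i : Fin k, diss A (π i) := by omega
  have hsup : ∑ i : Fin k, diss A (π i) ≤ k * (univ.sup fun i => diss A (π i)) := by
    calc ∑ i, diss A (π i)
        ≤ (univ : Finset (Fin k)).card • (univ.sup fun i => diss A (π i)) :=
          Finset.sum_le_card_nsmul _ _ _ fun i _ => Finset.le_sup (f := fun i => diss A (π i)) (Finset.mem_univ i)
      _ = k * (univ.sup fun i => diss A (π i)) := by simp [smul_eq_mul]
  exact Nat.le_of_mul_le_mul_left (hds.trans hsup) (by omega)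

theorem stmt13 (k : ℕ) (hk : 1 ≤ k) :
    (∀ i j : Fin k, i ≠ j → Disjoint (TwoPathAlloc k i) (TwoPathAlloc k j)) ∧
    (∀ i : Fin k, diss (PathsArc 2 k) (TwoPathAlloc k i) = k - 1) ∧
    (∀ π : Fin k → Set (Fin 2 × Fin k), (∀ i j, i ≠ j → Disjoint (π i) (π j)) →
      k - 1 ≤ Finset.univ.sup fun i => diss (PathsArc 2 k) (π i)) := by
  refine ⟨?_, fun i => part2 k hk i, fun π h => part3 k hk π h⟩
  intro i j hij
  rw [Set.disjoint_left]
  intro p hp hq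
  simp only [TwoPathAlloc, Set.mem_insert_iff, Set.mem_singleton_iff] at hp hq
  rcases hp with rfl | rfl <;> rcases hq with h | h
  · exact hij (by simpa using congrArg Prod.snd h)
  · exact absurd (show (0 : Fin 2) = 1 from congrArg Prod.fst h) (by decide)
  · exact absurd (show (1 : Fin 2) = 0 from congrArg Prod.fst h) (by decide)
  · exact hij (Fin.rev_injective (by simpa using congrArg Prod.snd h))
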